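/- A set E of fragments of a logic program P is a stable fragment set of P if and only if the union of all fragments in E is a generating set of P and E equals the set of all fragments contained in that union. -/

import Mathlib

/-- A literal over atoms `A`: `(true, a)` is the atom `a`, `(false, a)` is `¬ a`. -/
abbrev Lit (A : Type) := Bool × A

/-- A rule with head, positive body and negative body. -/
structure Rule (A : Type) where
  head : Lit A
  pos : Set (Lit A)
  neg : Set (Lit A)

variable {A : Type}

/-- Heads of a set of rules. -/
def headSet (R : Set (Rule A)) : Set (Lit A) := Rule.head '' R

/-- `R ⊆ P` positively satisfies `P`. -/
def PosSat (P R : Set (Rule A)) : Prop :=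
  R ⊆ P ∧ ∀ r ∈ P, r.pos ⊆ headSet R → r ∈ R

/-- The minimal set of rules positively satisfying `P`. -/
def MP (P : Set (Rule A)) : Set (Rule A) := ⋂₀ {R | PosSat P R}

/-- A set of rules defeats a rule. -/
def defeatsRule (R : Set (Rule A)) (r : Rule A) : Prop :=
  (headSet R ∩ r.neg).Nonempty

/-- A set of rules defeats a set of rules. -/
def defeatsSet (R₁ R₂ : Set (Rule A)) : Prop := ∃ r ∈ R₂, defeatsRule R₁ r

/-- The reduct `P^R` removes each rule defeated by `R`. -/
def reduct (P R : Set (Rule A)) : Set (Rule A) := {r ∈ P | ¬ defeatsRule R r}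

/-- `R ⊆ P` is a generating set of `P` iff `R = MP (P^R)`. -/
def GenSet (P R : Set (Rule A)) : Prop := R ⊆ P ∧ R = MP (reduct P R)

/-- A set of literals is consistent iff it contains no complementary pair. -/
def Consistent (S : Set (Lit A)) : Prop :=
  ∀ a : A, ¬ (((true, a) ∈ S) ∧ ((false, a) ∈ S))

/-- Answer sets via generating sets. -/
def AnswerSet (P : Set (Rule A)) (S : Set (Lit A)) : Prop :=
  Consistent S ∧ ∃ R, GenSet P R ∧ headSet R = S

/-- `Γ_S(P)`: rules whose positive body is in `S` and negative body disjoint from `S`. -/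
def Gamma (S : Set (Lit A)) (P : Set (Rule A)) : Set (Rule A) :=
  {r ∈ P | r.pos ⊆ S ∧ r.neg ∩ S = ∅}

/-- Fragments of a program. -/
def Frag (P : Set (Rule A)) : Set (Set (Rule A)) := {R | R ⊆ P ∧ MP R = R}

/-- Fragment reduct: remove fragments defeated by a member of `E`. -/
def fragReduct (P : Set (Rule A)) (E : Set (Set (Rule A))) : Set (Set (Rule A)) :=
  {X ∈ Frag P | ¬ ∃ Y ∈ E, defeatsSet Y X}

/-- Stable fragment sets. -/
def StableFragSet (P : Set (Rule A)) (E : Set (Set (Rule A))) : Prop :=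
  E ⊆ Frag P ∧ fragReduct P E = E

/-- Mutually defeating (conflicting) sets of rules. -/
def Conflicting (X Y : Set (Rule A)) : Prop := defeatsSet X Y ∧ defeatsSet Y X

/-- `X` overrides `Y` w.r.t. the preference relation `lt`. -/
def Overrides (lt : Rule A → Rule A → Prop) (X Y : Set (Rule A)) : Prop :=
  Conflicting X Y ∧
    ∀ r₁ ∈ X, defeatsRule Y r₁ → ∃ r₂ ∈ Y, defeatsRule X r₂ ∧ lt r₂ r₁

/-- Preferred fragment reduct (semantics G). -/
def prefFragReduct (lt : Rule A → Rule A → Prop) (P : Set (Rule A))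
    (E : Set (Set (Rule A))) : Set (Set (Rule A)) :=
  {X ∈ Frag P | ¬ ∃ Y ∈ E, defeatsSet Y X ∧ ¬ Overrides lt X Y}

/-- Preferred stable fragment sets (semantics G). -/
def PrefStableFragSet (lt : Rule A → Rule A → Prop) (P : Set (Rule A))
    (E : Set (Set (Rule A))) : Prop :=
  E ⊆ Frag P ∧ prefFragReduct lt P E = E

/-- Preferred answer sets under the fragment-based semantics G. -/
def GPrefAnswerSet (lt : Rule A → Rule A → Prop) (P : Set (Rule A))
    (S : Set (Lit A)) : Prop :=
  Consistent S ∧ ∃ E, PrefStableFragSet lt P E ∧ headSet (⋃₀ E) = S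

/-- `T(r,R)` for semantics GNO. -/
def Trules (lt : Rule A → Rule A → Prop) (r : Rule A) (R : Set (Rule A)) :
    Set (Rule A) :=
  MP {p ∈ R | ¬ lt p r}

/-- GNO reduct: remove rules `r` with `body⁻(r) ∩ head(T(r,R)) ≠ ∅`. -/
def gnoReduct (lt : Rule A → Rule A → Prop) (P R : Set (Rule A)) : Set (Rule A) :=
  {r ∈ P | ¬ (r.neg ∩ headSet (Trules lt r R)).Nonempty}

/-- GNO-preferred generating sets. -/
def GNOPrefGen (lt : Rule A → Rule A → Prop) (P R : Set (Rule A)) : Prop :=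
  GenSet P R ∧ R = MP (gnoReduct lt P R)

/-- GNO-preferred answer sets. -/
def GNOPrefAnswerSet (lt : Rule A → Rule A → Prop) (P : Set (Rule A))
    (S : Set (Lit A)) : Prop :=
  Consistent S ∧ ∃ R, GNOPrefGen lt P R ∧ headSet R = S

/-- A rule defeats a rule. -/
def defeats (r₁ r₂ : Rule A) : Prop := r₁.head ∈ r₂.neg

/-- `r₁` directly overrides `r₂` w.r.t. `lt`. -/
def DirOverrides (lt : Rule A → Rule A → Prop) (r₁ r₂ : Rule A) : Prop :=
  (defeats r₁ r₂ ∧ defeats r₂ r₁) ∧ lt r₂ r₁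

/-- D-reduct for the direct-conflict semantics. -/
def dReduct (lt : Rule A → Rule A → Prop) (P R : Set (Rule A)) : Set (Rule A) :=
  {r₁ ∈ P | ¬ ∃ r₂ ∈ R, defeats r₂ r₁ ∧ ¬ DirOverrides lt r₁ r₂}

/-- D-preferred generating sets. -/
def DPrefGen (lt : Rule A → Rule A → Prop) (P R : Set (Rule A)) : Prop :=
  R = MP (dReduct lt P R)

/-- D-preferred answer sets. -/
def DPrefAnswerSet (lt : Rule A → Rule A → Prop) (P : Set (Rule A))
    (S : Set (Lit A)) : Prop :=
  Consistent S ∧ ∃ R, DPrefGen lt P R ∧ headSet R = S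

/-- Stratified programs. -/
def Stratified (P : Set (Rule A)) : Prop :=
  ∃ lam : Lit A → ℕ, ∀ r ∈ P,
    (∀ l ∈ r.pos, lam l ≤ lam r.head) ∧ (∀ l ∈ r.neg, lam l < lam r.head)

lemma posSat_self (P : Set (Rule A)) : PosSat P P :=
  ⟨subset_rfl, fun r hr _ => hr⟩

lemma MP_subset (P : Set (Rule A)) : MP P ⊆ P :=
  Set.sInter_subset_of_mem (posSat_self P)

lemma headSet_mono {R S : Set (Rule A)} (h : R ⊆ S) : headSet R ⊆ headSet S :=
  Set.image_mono h

lemma posSat_MP (P : Set (Rule A)) : PosSat P (MP P) := by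
  refine ⟨MP_subset P, fun r hr hpos => ?_⟩
  intro R hR
  exact hR.2 r hr (hpos.trans (headSet_mono (Set.sInter_subset_of_mem hR)))

lemma MP_le {P R : Set (Rule A)} (h : PosSat P R) : MP P ⊆ R :=
  Set.sInter_subset_of_mem h

lemma MP_mono {P Q : Set (Rule A)} (h : P ⊆ Q) : MP P ⊆ MP Q := by
  have : PosSat P (MP Q ∩ P) := by
    refine ⟨Set.inter_subset_right, fun r hr hpos => ?_⟩
    exact ⟨(posSat_MP Q).2 r (h hr)
      (hpos.trans (headSet_mono Set.inter_subset_left)), hr⟩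
  exact (MP_le this).trans Set.inter_subset_left

lemma MP_idem (P : Set (Rule A)) : MP (MP P) = MP P := by
  apply Set.Subset.antisymm (MP_subset _)
  have : PosSat P (MP (MP P)) := by
    refine ⟨(MP_subset _).trans (MP_subset _), fun r hr hpos => ?_⟩
    have hr' : r ∈ MP P := (posSat_MP P).2 r hr
      (hpos.trans (headSet_mono (MP_subset _)))
    exact (posSat_MP (MP P)).2 r hr' hpos
  exact MP_le this

lemma defeatsRule_sUnion {E : Set (Set (Rule A))} {r : Rule A} :
    defeatsRule (⋃₀ E) r ↔ ∃ Y ∈ E, defeatsRule Y r := by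
  constructor
  · rintro ⟨l, ⟨s, ⟨Y, hY, hs⟩, hl⟩, hneg⟩
    exact ⟨Y, hY, l, ⟨s, hs, hl⟩, hneg⟩
  · rintro ⟨Y, hY, l, ⟨s, hs, hl⟩, hneg⟩
    exact ⟨l, ⟨s, ⟨Y, hY, hs⟩, hl⟩, hneg⟩

lemma fragReduct_eq (P : Set (Rule A)) (E : Set (Set (Rule A))) :
    fragReduct P E = Frag (reduct P (⋃₀ E)) := by
  ext X
  simp only [fragReduct, Frag, reduct, Set.mem_setOf_eq]
  constructor
  · rintro ⟨⟨hXP, hMP⟩, hnd⟩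
    refine ⟨fun r hr => ⟨hXP hr, fun hd => hnd ?_⟩, hMP⟩
    obtain ⟨Y, hY, hdY⟩ := defeatsRule_sUnion.mp hd
    exact ⟨Y, hY, r, hr, hdY⟩
  · rintro ⟨hX, hMP⟩
    refine ⟨⟨fun r hr => (hX hr).1, hMP⟩, ?_⟩
    rintro ⟨Y, hY, r, hr, hd⟩
    exact (hX hr).2 (defeatsRule_sUnion.mpr ⟨Y, hY, hd⟩)

lemma frag_eq (Q : Set (Rule A)) :
    Frag Q = {T : Set (Rule A) | MP T = T ∧ T ⊆ MP Q} := by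
  ext T
  simp only [Frag, Set.mem_setOf_eq]
  constructor
  · rintro ⟨hTQ, hMP⟩
    exact ⟨hMP, hMP ▸ MP_mono hTQ⟩
  · rintro ⟨hMP, hTU⟩
    exact ⟨hTU.trans (MP_subset Q), hMP⟩

lemma sUnion_frag (Q : Set (Rule A)) : ⋃₀ Frag Q = MP Q := by
  apply Set.Subset.antisymm
  · rintro r ⟨T, hT, hr⟩
    rw [frag_eq] at hT
    exact hT.2 hr
  · intro r hr
    exact ⟨MP Q, ⟨MP_subset Q, MP_idem Q⟩, hr⟩

/-- `E ⊆ Frag P` is a stable fragment set of `P` iff `⋃₀ E` is a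
generating set of `P` and `E` is exactly the set of fragments included in `⋃₀ E`. -/
theorem stableFragSet_iff_genSet (P : Set (Rule A)) (hP : P.Finite)
    (E : Set (Set (Rule A))) (hE : E ⊆ Frag P) :
    StableFragSet P E ↔
      GenSet P (⋃₀ E) ∧ E = {T : Set (Rule A) | MP T = T ∧ T ⊆ ⋃₀ E} := by
  constructor
  · rintro ⟨-, hstab⟩
    rw [fragReduct_eq] at hstab
    have hU : ⋃₀ E = MP (reduct P (⋃₀ E)) := by
      conv_lhs => rw [← hstab]
      exact sUnion_frag _
    have hUP : ⋃₀ E ⊆ P := by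
      rintro r ⟨T, hT, hr⟩
      exact (hE hT).1 hr
    refine ⟨⟨hUP, hU⟩, ?_⟩
    conv_lhs => rw [← hstab]
    rw [frag_eq, ← hU]
  · rintro ⟨⟨hUP, hU⟩, hEeq⟩
    refine ⟨hE, ?_⟩
    rw [fragReduct_eq, frag_eq, ← hU, ← hEeq]
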